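/- Let Γ = E ×_{σ,χ} B be a finite group with E an abelian minimal normal subgroup and B = Γ/E, and let G be a finitely generated group. Then |Epi(G,Γ)| = Σ_{ρ ∈ Epi(G,B)} ( ε_χ(ρ) · |Z¹_{σρ}(G,E)| − c ), where c is the number of complements of E in Γ and ε_χ(ρ) ∈ {0,1} records whether ρ lifts to Γ. -/

import Mathlib

/-- The underlying type of the extension `A ×_{σ,χ} B` of a group `B` by an abelian
group `A`, with monodromy `σ : B → Aut(A)` and `2`-cocycle `χ : B × B → A`. -/
@[ext] structure CocycleExtension {A B : Type*} [AddCommGroup A] [Group B]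
    (σ : B →* Multiplicative (AddAut A)) (χ : B → B → A) where
  fst : A
  snd : B

/-- `χ` is a normalized `2`-cocycle for the action `σ`. -/
class IsNormalizedCocycle {A B : Type*} [AddCommGroup A] [Group B]
    (σ : B →* Multiplicative (AddAut A)) (χ : B → B → A) : Prop where
  cocycle : ∀ b₁ b₂ b₃ : B,
    χ b₁ b₂ + χ (b₁ * b₂) b₃ = σ b₁ (χ b₂ b₃) + χ b₁ (b₂ * b₃)
  one_left : ∀ b : B, χ 1 b = 0
  one_right : ∀ b : B, χ b 1 = 0

namespace CocycleExtension

variable {A B : Type*} [AddCommGroup A] [Group B]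
  (σ : B →* Multiplicative (AddAut A)) (χ : B → B → A) [h : IsNormalizedCocycle σ χ]

/-- The group `A ×_{σ,χ} B`, with multiplication
`(a₁,b₁)(a₂,b₂) = (a₁ + σ_{b₁}(a₂) + χ(b₁,b₂), b₁b₂)`. -/
instance : Group (CocycleExtension σ χ) where
  mul p q := ⟨p.fst + σ p.snd q.fst + χ p.snd q.snd, p.snd * q.snd⟩
  one := ⟨0, 1⟩
  inv p := ⟨-(σ p.snd⁻¹ p.fst) - χ p.snd⁻¹ p.snd, p.snd⁻¹⟩
  mul_assoc p q r := by
    have key := h.cocycle p.snd q.snd r.snd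
    ext
    · show p.fst + σ p.snd q.fst + χ p.snd q.snd + σ (p.snd * q.snd) r.fst
          + χ (p.snd * q.snd) r.snd
        = p.fst + σ p.snd (q.fst + σ q.snd r.fst + χ q.snd r.snd)
          + χ p.snd (q.snd * r.snd)
      calc p.fst + σ p.snd q.fst + χ p.snd q.snd + σ (p.snd * q.snd) r.fst
            + χ (p.snd * q.snd) r.snd
          = p.fst + σ p.snd q.fst + σ p.snd (σ q.snd r.fst)
            + (χ p.snd q.snd + χ (p.snd * q.snd) r.snd) := by
            have hm : σ (p.snd * q.snd) r.fst = σ p.snd (σ q.snd r.fst) := by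
              rw [map_mul]; rfl
            rw [hm]; abel
        _ = p.fst + σ p.snd q.fst + σ p.snd (σ q.snd r.fst)
            + (σ p.snd (χ q.snd r.snd) + χ p.snd (q.snd * r.snd)) := by rw [key]
        _ = p.fst + σ p.snd (q.fst + σ q.snd r.fst + χ q.snd r.snd)
            + χ p.snd (q.snd * r.snd) := by
            simp only [map_add]; abel
    · show p.snd * q.snd * r.snd = p.snd * (q.snd * r.snd)
      exact mul_assoc _ _ _
  one_mul p := by
    ext
    · show 0 + σ 1 p.fst + χ 1 p.snd = p.fst
      simp [h.one_left]
    · show 1 * p.snd = p.snd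
      exact one_mul _
  mul_one p := by
    ext
    · show p.fst + σ p.snd 0 + χ p.snd 1 = p.fst
      simp [h.one_right]
    · show p.snd * 1 = p.snd
      exact mul_one _
  inv_mul_cancel p := by
    ext
    · show -(σ p.snd⁻¹ p.fst) - χ p.snd⁻¹ p.snd + σ p.snd⁻¹ p.fst + χ p.snd⁻¹ p.snd = 0
      abel
    · show p.snd⁻¹ * p.snd = 1
      exact inv_mul_cancel _

/-- The canonical projection `A ×_{σ,χ} B → B`. -/
def proj : CocycleExtension σ χ →* B where
  toFun p := p.snd
  map_one' := rfl
  map_mul' _ _ := rfl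

end CocycleExtension

section CardEpiAux

namespace CardEpiAux

open CocycleExtension

theorem finite_monoidHom (G H : Type*) [Group G] [Group.FG G] [Group H] [Finite H] :
    Finite (G →* H) := by
  obtain ⟨S, hS, hfin⟩ := Group.fg_iff.mp ‹Group.FG G›
  haveI := hfin.to_subtype
  refine Finite.of_injective (fun f : G →* H => fun s : S => f s) ?_
  intro f g h
  exact MonoidHom.eq_of_eqOn_dense hS fun x hx => congrFun h ⟨x, hx⟩

theorem card_and_add_card_and_not {α : Type*} [Finite α] (p q : α → Prop) :
    Nat.card {x // p x ∧ q x} + Nat.card {x // p x ∧ ¬ q x} = Nat.card {x // p x} := by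
  classical
  rw [← Nat.card_sum]
  exact Nat.card_congr (Equiv.trans
    (Equiv.sumCongr (Equiv.subtypeSubtypeEquivSubtypeInter p q).symm
      (Equiv.subtypeSubtypeEquivSubtypeInter p (fun x => ¬ q x)).symm)
    (Equiv.sumCompl fun x : {x // p x} => q x.1))

variable {E B : Type*} [AddCommGroup E] [Group B]
  (σ : B →* Multiplicative (AddAut E)) (χ : B → B → E) [hc : IsNormalizedCocycle σ χ]

theorem mul_def (p q : CocycleExtension σ χ) : p * q =
    ⟨p.fst + σ p.snd q.fst + χ p.snd q.snd, p.snd * q.snd⟩ := rfl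

theorem one_def : (1 : CocycleExtension σ χ) = ⟨0, 1⟩ := rfl

theorem proj_apply (p : CocycleExtension σ χ) : proj σ χ p = p.snd := rfl

theorem proj_surjective : Function.Surjective (proj σ χ) :=
  fun b => ⟨⟨0, b⟩, rfl⟩

theorem ker_comm {p q : CocycleExtension σ χ} (hp : p ∈ (proj σ χ).ker)
    (hq : q ∈ (proj σ χ).ker) : p * q = q * p := by
  have hp' : p.snd = 1 := hp
  have hq' : q.snd = 1 := hq
  have h1 : χ (1 : B) 1 = 0 := hc.one_left 1
  ext
  · show p.fst + σ p.snd q.fst + χ p.snd q.snd = q.fst + σ q.snd p.fst + χ q.snd p.snd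
    rw [hp', hq', h1, map_one]
    simpa using add_comm p.fst q.fst
  · show p.snd * q.snd = q.snd * p.snd
    rw [hp', hq']

theorem finite_ext [Finite E] [Finite B] : Finite (CocycleExtension σ χ) :=
  Finite.of_equiv (E × B)
    ⟨fun p => ⟨p.1, p.2⟩, fun p => ⟨p.fst, p.snd⟩, fun _ => rfl, fun _ => rfl⟩

variable {G : Type*} [Group G]

/-- The lift of `ρ` determined by a `χ`-twisted function. -/
def liftOf (ρ : G →* B) (f : G → E)
    (hf : ∀ g h : G, f (g * h) = f g + σ (ρ g) (f h) + χ (ρ g) (ρ h)) :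
    G →* CocycleExtension σ χ where
  toFun g := ⟨f g, ρ g⟩
  map_one' := by
    have h0 : f 1 = 0 := by
      have := hf 1 1
      rw [one_mul, map_one, hc.one_left, map_one] at this
      simpa using this
    rw [one_def]
    exact CocycleExtension.ext h0 (map_one ρ)
  map_mul' g h := by
    rw [mul_def]
    exact CocycleExtension.ext (hf g h) (map_mul ρ g h)

/-- Lifts of `ρ` correspond to `χ`-twisted functions. -/
noncomputable def liftEquiv (ρ : G →* B) :
    {F : G →* CocycleExtension σ χ // (proj σ χ).comp F = ρ} ≃
      {f : G → E // ∀ g h : G, f (g * h) = f g + σ (ρ g) (f h) + χ (ρ g) (ρ h)} where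
  toFun F := ⟨fun g => (F.1 g).fst, by
    intro g h
    have hs : ∀ g, (F.1 g).snd = ρ g := fun g => DFunLike.congr_fun F.2 g
    have hm := F.1.map_mul g h
    rw [mul_def] at hm
    dsimp only
    rw [hm, hs g, hs h]⟩
  invFun f := ⟨liftOf σ χ ρ f.1 f.2, rfl⟩
  left_inv F := by
    have hs : ∀ g, (F.1 g).snd = ρ g := fun g => DFunLike.congr_fun F.2 g
    refine Subtype.ext (MonoidHom.ext fun g => ?_)
    exact CocycleExtension.ext rfl ((hs g).symm)
  right_inv f := rfl

open Classical in
theorem card_lifts (ρ : G →* B) :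
    Nat.card {F : G →* CocycleExtension σ χ // (proj σ χ).comp F = ρ} =
      (if ∃ f : G → E, ∀ g h : G,
          f (g * h) = f g + σ (ρ g) (f h) + χ (ρ g) (ρ h) then 1 else 0) *
        Nat.card {f : G → E // ∀ g h : G, f (g * h) = f g + σ (ρ g) (f h)} := by
  by_cases hε : ∃ f : G → E, ∀ g h : G,
      f (g * h) = f g + σ (ρ g) (f h) + χ (ρ g) (ρ h)
  · rw [if_pos hε, one_mul]
    obtain ⟨f₀, hf₀⟩ := hε
    refine Nat.card_congr ((liftEquiv σ χ ρ).trans ?_)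
    refine ⟨fun f => ⟨fun g => f.1 g - f₀ g, ?_⟩, fun d => ⟨fun g => d.1 g + f₀ g, ?_⟩, ?_, ?_⟩
    · intro g h
      dsimp only
      rw [f.2 g h, hf₀ g h, map_sub]
      abel
    · intro g h
      dsimp only
      rw [d.2 g h, hf₀ g h, map_add]
      abel
    · intro f
      refine Subtype.ext (funext fun g => ?_)
      simp
    · intro d
      refine Subtype.ext (funext fun g => ?_)
      simp
  · rw [if_neg hε, zero_mul]
    have : IsEmpty {F : G →* CocycleExtension σ χ // (proj σ χ).comp F = ρ} := by
      refine ⟨fun F => hε ?_⟩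
      obtain ⟨f, hf⟩ := liftEquiv σ χ ρ F
      exact ⟨f, hf⟩
    exact Nat.card_of_isEmpty

/-- The lift associated to a complement. -/
noncomputable def complementMulEquiv (U : Subgroup (CocycleExtension σ χ))
    (h1 : U ⊓ (proj σ χ).ker = ⊥) (h2 : U ⊔ (proj σ χ).ker = ⊤) :
    U ≃* B := by
  refine MulEquiv.ofBijective ((proj σ χ).comp U.subtype) ⟨?_, ?_⟩
  · rw [injective_iff_map_eq_one]
    intro u hu
    have : (u : CocycleExtension σ χ) ∈ U ⊓ (proj σ χ).ker := ⟨u.2, hu⟩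
    rw [h1, Subgroup.mem_bot] at this
    exact Subtype.ext this
  · intro b
    obtain ⟨γ, hγ⟩ := proj_surjective σ χ b
    have hmem : γ ∈ U ⊔ (proj σ χ).ker := h2 ▸ Subgroup.mem_top γ
    rw [← SetLike.mem_coe, Subgroup.mul_normal] at hmem
    obtain ⟨u, hu, k, hk, huk⟩ := hmem
    refine ⟨⟨u, hu⟩, ?_⟩
    have huk' : u * k = γ := huk
    have h3 : proj σ χ γ = proj σ χ u * proj σ χ k := by rw [← map_mul, huk']
    rw [hγ, MonoidHom.mem_ker.mp hk, mul_one] at h3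
    exact h3.symm

theorem complementMulEquiv_apply (U : Subgroup (CocycleExtension σ χ)) (h1 h2) (u : U) :
    complementMulEquiv σ χ U h1 h2 u = proj σ χ (u : CocycleExtension σ χ) := rfl

/-- The lift associated to a complement. -/
noncomputable def liftOfComplement (ρ : G →* B) (U : Subgroup (CocycleExtension σ χ))
    (h1 : U ⊓ (proj σ χ).ker = ⊥) (h2 : U ⊔ (proj σ χ).ker = ⊤) :
    G →* CocycleExtension σ χ :=
  U.subtype.comp ((complementMulEquiv σ χ U h1 h2).symm.toMonoidHom.comp ρ)

theorem liftOfComplement_comp (ρ : G →* B) (U : Subgroup (CocycleExtension σ χ))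
    (h1 : U ⊓ (proj σ χ).ker = ⊥) (h2 : U ⊔ (proj σ χ).ker = ⊤) :
    (proj σ χ).comp (liftOfComplement σ χ ρ U h1 h2) = ρ := by
  set e := complementMulEquiv σ χ U h1 h2
  refine MonoidHom.ext fun g => ?_
  show proj σ χ ((e.symm (ρ g) : U) : CocycleExtension σ χ) = ρ g
  rw [← complementMulEquiv_apply σ χ U h1 h2, e.apply_symm_apply]

theorem liftOfComplement_range (ρ : G →* B) (hρ : Function.Surjective ρ)
    (U : Subgroup (CocycleExtension σ χ))
    (h1 : U ⊓ (proj σ χ).ker = ⊥) (h2 : U ⊔ (proj σ χ).ker = ⊤) :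
    (liftOfComplement σ χ ρ U h1 h2).range = U := by
  set e := complementMulEquiv σ χ U h1 h2
  apply le_antisymm
  · rintro _ ⟨g, rfl⟩
    exact (e.symm (ρ g)).2
  · intro u hu
    obtain ⟨g, hg⟩ := hρ (e ⟨u, hu⟩)
    refine ⟨g, ?_⟩
    show ((e.symm (ρ g) : U) : CocycleExtension σ χ) = u
    rw [hg, e.symm_apply_apply]

theorem range_complement (ρ : G →* B) (hρ : Function.Surjective ρ)
    (hmin : ∀ N : Subgroup (CocycleExtension σ χ), N.Normal →
      N ≤ (proj σ χ).ker → N = ⊥ ∨ N = (proj σ χ).ker)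
    (F : G →* CocycleExtension σ χ) (hcomp : (proj σ χ).comp F = ρ)
    (hns : ¬ Function.Surjective F) :
    F.range ⊓ (proj σ χ).ker = ⊥ ∧ F.range ⊔ (proj σ χ).ker = ⊤ := by
  have hπF : ∀ g, proj σ χ (F g) = ρ g := fun g => DFunLike.congr_fun hcomp g
  have hdecomp : ∀ γ : CocycleExtension σ χ, ∃ g : G,
      γ * (F g)⁻¹ ∈ (proj σ χ).ker := by
    intro γ
    obtain ⟨g, hg⟩ := hρ (proj σ χ γ)
    refine ⟨g, ?_⟩
    rw [MonoidHom.mem_ker, map_mul, map_inv, hπF, hg, mul_inv_cancel]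
  have hsup : F.range ⊔ (proj σ χ).ker = ⊤ := by
    rw [eq_top_iff]
    intro γ _
    obtain ⟨g, hg⟩ := hdecomp γ
    have h1 : F g ∈ F.range ⊔ (proj σ χ).ker := Subgroup.mem_sup_left ⟨g, rfl⟩
    have h2 : γ * (F g)⁻¹ ∈ F.range ⊔ (proj σ χ).ker := Subgroup.mem_sup_right hg
    simpa using mul_mem h2 h1
  refine ⟨?_, hsup⟩
  have hN : (F.range ⊓ (proj σ χ).ker).Normal := by
    constructor
    intro n hn γ
    obtain ⟨g, hg⟩ := hdecomp γ
    set u := F g with hu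
    have hum : u ∈ F.range := ⟨g, rfl⟩
    obtain ⟨hn1, hn2⟩ := Subgroup.mem_inf.mp hn
    have hm : u * n * u⁻¹ ∈ F.range ⊓ (proj σ χ).ker :=
      Subgroup.mem_inf.mpr ⟨mul_mem (mul_mem hum hn1) (F.range.inv_mem hum),
        (MonoidHom.normal_ker _).conj_mem n hn2 u⟩
    have hcm : (γ * u⁻¹) * (u * n * u⁻¹) = (u * n * u⁻¹) * (γ * u⁻¹) :=
      ker_comm σ χ hg (Subgroup.mem_inf.mp hm).2
    have hrw : γ * n * γ⁻¹ = (γ * u⁻¹) * (u * n * u⁻¹) * (γ * u⁻¹)⁻¹ := by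
      group
    rw [hrw, hcm, mul_inv_cancel_right]
    exact hm
  rcases hmin _ hN inf_le_right with h | h
  · exact h
  · exfalso
    apply hns
    rw [← MonoidHom.range_eq_top, ← hsup, eq_comm, sup_eq_left]
    exact inf_eq_right.mp h

theorem card_nonsurj (ρ : G →* B) (hρ : Function.Surjective ρ)
    (hne : (proj σ χ).ker ≠ ⊥)
    (hmin : ∀ N : Subgroup (CocycleExtension σ χ), N.Normal →
      N ≤ (proj σ χ).ker → N = ⊥ ∨ N = (proj σ χ).ker) :
    Nat.card {F : G →* CocycleExtension σ χ //
        (proj σ χ).comp F = ρ ∧ ¬ Function.Surjective F} =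
      Nat.card {U : Subgroup (CocycleExtension σ χ) //
        U ⊓ (proj σ χ).ker = ⊥ ∧ U ⊔ (proj σ χ).ker = ⊤} := by
  refine Nat.card_eq_of_bijective
    (fun F => ⟨F.1.range, range_complement σ χ ρ hρ hmin F.1 F.2.1 F.2.2⟩) ⟨?_, ?_⟩
  · rintro ⟨F₁, hc₁, hs₁⟩ ⟨F₂, hc₂, hs₂⟩ hr
    have hr' : F₁.range = F₂.range := congrArg Subtype.val hr
    have hinf := (range_complement σ χ ρ hρ hmin F₁ hc₁ hs₁).1
    refine Subtype.ext (MonoidHom.ext fun g => ?_)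
    have hmem : F₁ g * (F₂ g)⁻¹ ∈ F₁.range ⊓ (proj σ χ).ker := by
      rw [Subgroup.mem_inf]
      constructor
      · refine mul_mem ⟨g, rfl⟩ ?_
        rw [hr']
        exact F₂.range.inv_mem ⟨g, rfl⟩
      · rw [MonoidHom.mem_ker, map_mul, map_inv]
        rw [show proj σ χ (F₁ g) = ρ g from DFunLike.congr_fun hc₁ g,
          show proj σ χ (F₂ g) = ρ g from DFunLike.congr_fun hc₂ g,
          mul_inv_cancel]
    rw [hinf, Subgroup.mem_bot] at hmem
    exact mul_inv_eq_one.mp hmem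
  · rintro ⟨U, h1, h2⟩
    refine ⟨⟨liftOfComplement σ χ ρ U h1 h2, liftOfComplement_comp σ χ ρ U h1 h2, ?_⟩, ?_⟩
    · intro hs
      have : U = ⊤ := by
        rw [← liftOfComplement_range σ χ ρ hρ U h1 h2, MonoidHom.range_eq_top]
        exact hs
      apply hne
      rw [← h1, this, top_inf_eq]
    · exact Subtype.ext (liftOfComplement_range σ χ ρ hρ U h1 h2)

open Classical in
theorem card_surj_lifts [Finite E] [Finite B] [Group.FG G] (ρ : G →* B)
    (hρ : Function.Surjective ρ)
    (hne : (proj σ χ).ker ≠ ⊥)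
    (hmin : ∀ N : Subgroup (CocycleExtension σ χ), N.Normal →
      N ≤ (proj σ χ).ker → N = ⊥ ∨ N = (proj σ χ).ker) :
    Nat.card {F : G →* CocycleExtension σ χ //
        (proj σ χ).comp F = ρ ∧ Function.Surjective F} =
      (if ∃ f : G → E, ∀ g h : G,
          f (g * h) = f g + σ (ρ g) (f h) + χ (ρ g) (ρ h) then 1 else 0) *
        Nat.card {f : G → E // ∀ g h : G, f (g * h) = f g + σ (ρ g) (f h)} -
      Nat.card {U : Subgroup (CocycleExtension σ χ) //
        U ⊓ (proj σ χ).ker = ⊥ ∧ U ⊔ (proj σ χ).ker = ⊤} := by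
  haveI := finite_ext σ χ
  haveI := finite_monoidHom G (CocycleExtension σ χ)
  have hsplit :
      Nat.card {F : G →* CocycleExtension σ χ //
          (proj σ χ).comp F = ρ ∧ Function.Surjective F} +
        Nat.card {F : G →* CocycleExtension σ χ //
          (proj σ χ).comp F = ρ ∧ ¬ Function.Surjective F} =
      Nat.card {F : G →* CocycleExtension σ χ // (proj σ χ).comp F = ρ} :=
    card_and_add_card_and_not (fun F => (proj σ χ).comp F = ρ) (fun F => Function.Surjective ⇑F)
  rw [card_lifts σ χ ρ, card_nonsurj σ χ ρ hρ hne hmin] at hsplit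
  exact Nat.eq_sub_of_add_eq hsplit

end CardEpiAux

end CardEpiAux

open Classical in
/-- Let `Γ = E ×_{σ,χ} B` be a finite group with `E` (realized as the kernel of the
projection `π : Γ → B`) an abelian minimal normal subgroup, and let `G` be a finitely
generated group.  Then
`|Epi(G,Γ)| = ∑_{ρ ∈ Epi(G,B)} (ε_χ(ρ) ⬝ |Z¹_{σρ}(G,E)| - c)`,
where `c` is the number of complements of `E` in `Γ` and `ε_χ(ρ) ∈ {0,1}` records whether
the `2`-cocycle `-ρ*χ` is a coboundary, i.e. whether `ρ` lifts to `Γ`. -/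
theorem card_epi_cocycleExtension
    {E B : Type*} [AddCommGroup E] [Finite E] [Group B] [Finite B]
    (σ : B →* Multiplicative (AddAut E)) (χ : B → B → E) [IsNormalizedCocycle σ χ]
    (hne : (CocycleExtension.proj σ χ).ker ≠ ⊥)
    (hmin : ∀ N : Subgroup (CocycleExtension σ χ), N.Normal →
      N ≤ (CocycleExtension.proj σ χ).ker → N = ⊥ ∨ N = (CocycleExtension.proj σ χ).ker)
    (G : Type*) [Group G] [Group.FG G] :
    Nat.card {ρ : G →* CocycleExtension σ χ // Function.Surjective ρ} =
      ∑ᶠ ρ : {ρ : G →* B // Function.Surjective ρ},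
        ((if ∃ f : G → E, ∀ g h : G,
            f (g * h) = f g + σ (ρ.1 g) (f h) + χ (ρ.1 g) (ρ.1 h) then 1 else 0) *
          Nat.card {f : G → E // ∀ g h : G, f (g * h) = f g + σ (ρ.1 g) (f h)} -
        Nat.card {U : Subgroup (CocycleExtension σ χ) //
          U ⊓ (CocycleExtension.proj σ χ).ker = ⊥ ∧
            U ⊔ (CocycleExtension.proj σ χ).ker = ⊤}) := by
  
  classical
  haveI : Finite (CocycleExtension σ χ) := CardEpiAux.finite_ext σ χ
  haveI : Finite (G →* CocycleExtension σ χ) :=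
    CardEpiAux.finite_monoidHom G (CocycleExtension σ χ)
  haveI : Finite (G →* B) := CardEpiAux.finite_monoidHom G B
  haveI : Fintype {ρ : G →* B // Function.Surjective ρ} := Fintype.ofFinite _
  rw [finsum_eq_sum_of_fintype]
  have hsig : Nat.card {ρ : G →* CocycleExtension σ χ // Function.Surjective ρ} =
      ∑ ρ : {ρ : G →* B // Function.Surjective ρ},
        Nat.card {F : G →* CocycleExtension σ χ //
          (CocycleExtension.proj σ χ).comp F = ρ.1 ∧ Function.Surjective F} := by
    have e0 := (Equiv.sigmaFiberEquiv
      (fun F : {F : G →* CocycleExtension σ χ // Function.Surjective F} =>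
        (⟨(CocycleExtension.proj σ χ).comp F.1,
          (CardEpiAux.proj_surjective σ χ).comp F.2⟩ :
            {ρ : G →* B // Function.Surjective ρ}))).symm
    have eρ : ∀ ρ : {ρ : G →* B // Function.Surjective ρ},
        {F' : {F : G →* CocycleExtension σ χ // Function.Surjective F} //
          (⟨(CocycleExtension.proj σ χ).comp F'.1,
            (CardEpiAux.proj_surjective σ χ).comp F'.2⟩ :
              {ρ : G →* B // Function.Surjective ρ}) = ρ} ≃
        {F : G →* CocycleExtension σ χ //
          (CocycleExtension.proj σ χ).comp F = ρ.1 ∧ Function.Surjective F} :=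
      fun ρ =>
        ⟨fun x => ⟨x.1.1, congrArg Subtype.val x.2, x.1.2⟩,
         fun y => ⟨⟨y.1, y.2.2⟩, Subtype.ext y.2.1⟩,
         fun _ => rfl, fun _ => rfl⟩
    rw [Nat.card_congr (e0.trans (Equiv.sigmaCongrRight eρ))]
    haveI : ∀ ρ : {ρ : G →* B // Function.Surjective ρ},
        Fintype {F : G →* CocycleExtension σ χ //
          (CocycleExtension.proj σ χ).comp F = ρ.1 ∧ Function.Surjective F} :=
      fun ρ => Fintype.ofFinite _
    simp only [Nat.card_eq_fintype_card]
    exact Fintype.card_sigma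
  rw [hsig]
  exact Finset.sum_congr rfl fun ρ _ =>
    CardEpiAux.card_surj_lifts σ χ ρ.1 ρ.2 hne hmin
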